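/- (Remainder-term bound, bounded case.) Consider the Kalman filter recursions for (G, F, v, W): n ≥ 1, G a real n×n matrix, F ∈ ℝⁿ, v > 0, W a symmetric positive definite n×n matrix; given a symmetric positive semidefinite initial covariance C_0, define for t ≥ 1: R_t = G C_{t−1} Gᵀ + W, Q_t = ⟨F, R_t F⟩ + v, A_t = R_t F/Q_t, C_t = R_t − Q_t A_t A_tᵀ, and Z_t = G(I − A_t Fᵀ). Assume R_t converges (entrywise) as t → ∞ to a symmetric positive semidefinite matrix R satisfying the Riccati fixed-point equation R = G(R − (R F)(R F)ᵀ/(⟨F, R F⟩ + v))Gᵀ + W. Fix a_1 ∈ ℝⁿ and B_0 > 0. Then there exist ρ' with 0 < ρ' < 1 and c ≥ 0 such that: for every real sequence (Y_t)_{t≥0} with |Y_t| ≤ B_0 for all t, defining a_{t+1} = Y_t·G A_t + Z_t a_t for t ≥ 1, one has for all integers s > 0 and t > s: |⟨F, (Z_t Z_{t−1} ⋯ Z_{t−s})·a_{t−s}⟩| ≤ (ρ')ˢ·c. -/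

import Mathlib

open Matrix Filter Topology BigOperators

namespace Stmt9Aux

variable {n : ℕ}

lemma dot_self_nonneg (x : Fin n → ℝ) : 0 ≤ x ⬝ᵥ x :=
  Finset.sum_nonneg fun _ _ => mul_self_nonneg _

lemma dot_self_pos {x : Fin n → ℝ} (hx : x ≠ 0) : 0 < x ⬝ᵥ x := by
  rcases Function.ne_iff.mp hx with ⟨i, hi⟩
  exact Finset.sum_pos' (fun j _ => mul_self_nonneg _)
    ⟨i, Finset.mem_univ i, mul_self_pos.mpr (by simpa using hi)⟩

lemma dot_cs (x y : Fin n → ℝ) : (x ⬝ᵥ y) ^ 2 ≤ (x ⬝ᵥ x) * (y ⬝ᵥ y) := by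
  simpa [dotProduct, sq] using Finset.sum_mul_sq_le_sq_mul_sq Finset.univ x y

lemma psd_nonneg {M : Matrix (Fin n) (Fin n) ℝ} (hM : M.PosSemidef) (x : Fin n → ℝ) :
    0 ≤ x ⬝ᵥ (M *ᵥ x) := by simpa using hM.dotProduct_mulVec_nonneg x

lemma symm_dot {M : Matrix (Fin n) (Fin n) ℝ} (hM : Mᵀ = M) (x y : Fin n → ℝ) :
    x ⬝ᵥ (M *ᵥ y) = y ⬝ᵥ (M *ᵥ x) := by
  rw [dotProduct_mulVec, ← mulVec_transpose, hM, dotProduct_comm]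

open scoped MatrixOrder

lemma psd_cs {M : Matrix (Fin n) (Fin n) ℝ} (hM : M.PosSemidef) (x y : Fin n → ℝ) :
    (x ⬝ᵥ (M *ᵥ y)) ^ 2 ≤ (x ⬝ᵥ (M *ᵥ x)) * (y ⬝ᵥ (M *ᵥ y)) := by
  set B := CFC.sqrt M with hB
  have hBB : B * B = M := CFC.sqrt_mul_sqrt_self M hM.nonneg
  have hBs : Bᵀ = B := by
    have := (CFC.sqrt_nonneg M).posSemidef.1
    rwa [IsHermitian, conjTranspose_eq_transpose_of_trivial] at this
  have key : ∀ u w : Fin n → ℝ, u ⬝ᵥ (M *ᵥ w) = (B *ᵥ u) ⬝ᵥ (B *ᵥ w) := by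
    intro u w
    rw [← hBB, ← mulVec_mulVec, dotProduct_mulVec, ← mulVec_transpose, hBs]
  rw [key x y, key x x, key y y]
  exact dot_cs _ _

/-- sum of squares of entries -/
noncomputable def sqEnt (M : Matrix (Fin n) (Fin n) ℝ) : ℝ := ∑ i, ∑ j, (M i j) ^ 2

lemma sqEnt_nonneg (M : Matrix (Fin n) (Fin n) ℝ) : 0 ≤ sqEnt M :=
  Finset.sum_nonneg fun _ _ => Finset.sum_nonneg fun _ _ => sq_nonneg _

lemma mulVec_self_le (M : Matrix (Fin n) (Fin n) ℝ) (x : Fin n → ℝ) :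
    (M *ᵥ x) ⬝ᵥ (M *ᵥ x) ≤ sqEnt M * (x ⬝ᵥ x) := by
  have h : ∀ i, ((M *ᵥ x) i) ^ 2 ≤ (∑ j, (M i j) ^ 2) * (x ⬝ᵥ x) := by
    intro i
    have := Finset.sum_mul_sq_le_sq_mul_sq Finset.univ (M i) x
    simpa [mulVec, dotProduct, sq] using this
  calc (M *ᵥ x) ⬝ᵥ (M *ᵥ x) = ∑ i, ((M *ᵥ x) i) ^ 2 := by
        simp [dotProduct, sq]
    _ ≤ ∑ i, (∑ j, (M i j) ^ 2) * (x ⬝ᵥ x) := Finset.sum_le_sum fun i _ => h i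
    _ = sqEnt M * (x ⬝ᵥ x) := by rw [sqEnt, Finset.sum_mul]

lemma quad_le (M : Matrix (Fin n) (Fin n) ℝ) (x : Fin n → ℝ) :
    x ⬝ᵥ (M *ᵥ x) ≤ Real.sqrt (sqEnt M) * (x ⬝ᵥ x) := by
  have h1 : (x ⬝ᵥ (M *ᵥ x)) ^ 2 ≤ sqEnt M * (x ⬝ᵥ x) ^ 2 := by
    calc (x ⬝ᵥ (M *ᵥ x)) ^ 2 ≤ (x ⬝ᵥ x) * ((M *ᵥ x) ⬝ᵥ (M *ᵥ x)) := dot_cs _ _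
      _ ≤ (x ⬝ᵥ x) * (sqEnt M * (x ⬝ᵥ x)) :=
          mul_le_mul_of_nonneg_left (mulVec_self_le M x) (dot_self_nonneg x)
      _ = sqEnt M * (x ⬝ᵥ x) ^ 2 := by ring
  calc x ⬝ᵥ (M *ᵥ x) ≤ |x ⬝ᵥ (M *ᵥ x)| := le_abs_self _
    _ = Real.sqrt ((x ⬝ᵥ (M *ᵥ x)) ^ 2) := (Real.sqrt_sq_eq_abs _).symm
    _ ≤ Real.sqrt (sqEnt M * (x ⬝ᵥ x) ^ 2) := Real.sqrt_le_sqrt h1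
    _ = Real.sqrt (sqEnt M) * (x ⬝ᵥ x) := by
        rw [Real.sqrt_mul (sqEnt_nonneg M), Real.sqrt_sq (dot_self_nonneg x)]

noncomputable def qf (S : Matrix (Fin n) (Fin n) ℝ) (x : Fin n → ℝ) : ℝ :=
  Real.sqrt (x ⬝ᵥ (S *ᵥ x))

lemma qf_nonneg (S : Matrix (Fin n) (Fin n) ℝ) (x : Fin n → ℝ) : 0 ≤ qf S x :=
  Real.sqrt_nonneg _

lemma qf_sq {S : Matrix (Fin n) (Fin n) ℝ} (hS : S.PosSemidef) (x : Fin n → ℝ) :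
    qf S x ^ 2 = x ⬝ᵥ (S *ᵥ x) := Real.sq_sqrt (psd_nonneg hS x)

lemma dot_le_qf {S : Matrix (Fin n) (Fin n) ℝ} (hS : S.PosSemidef) (x y : Fin n → ℝ) :
    x ⬝ᵥ (S *ᵥ y) ≤ qf S x * qf S y := by
  have h := psd_cs hS x y
  calc x ⬝ᵥ (S *ᵥ y) ≤ |x ⬝ᵥ (S *ᵥ y)| := le_abs_self _
    _ = Real.sqrt ((x ⬝ᵥ (S *ᵥ y)) ^ 2) := (Real.sqrt_sq_eq_abs _).symm
    _ ≤ Real.sqrt ((x ⬝ᵥ (S *ᵥ x)) * (y ⬝ᵥ (S *ᵥ y))) := Real.sqrt_le_sqrt h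
    _ = qf S x * qf S y := Real.sqrt_mul (psd_nonneg hS x) _

lemma qf_add_le {S : Matrix (Fin n) (Fin n) ℝ} (hS : S.PosSemidef) (x y : Fin n → ℝ) :
    qf S (x + y) ≤ qf S x + qf S y := by
  have hSs : Sᵀ = S := by
    have := hS.1; rwa [IsHermitian, conjTranspose_eq_transpose_of_trivial] at this
  have hexp : (x + y) ⬝ᵥ (S *ᵥ (x + y)) ≤ (qf S x + qf S y) ^ 2 := by
    have h1 : (x + y) ⬝ᵥ (S *ᵥ (x + y))
        = x ⬝ᵥ (S *ᵥ x) + 2 * (x ⬝ᵥ (S *ᵥ y)) + y ⬝ᵥ (S *ᵥ y) := by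
      rw [mulVec_add, dotProduct_add, add_dotProduct, add_dotProduct,
        symm_dot hSs y x]
      ring
    have h2 := dot_le_qf hS x y
    have h3 := qf_sq hS x
    have h4 := qf_sq hS y
    nlinarith
  calc qf S (x + y) = Real.sqrt ((x + y) ⬝ᵥ (S *ᵥ (x + y))) := rfl
    _ ≤ Real.sqrt ((qf S x + qf S y) ^ 2) := Real.sqrt_le_sqrt hexp
    _ = qf S x + qf S y := by
        rw [Real.sqrt_sq (add_nonneg (qf_nonneg _ _) (qf_nonneg _ _))]

lemma qf_smul (S : Matrix (Fin n) (Fin n) ℝ) (c : ℝ) (x : Fin n → ℝ) :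
    qf S (c • x) = |c| * qf S x := by
  have : (c • x) ⬝ᵥ (S *ᵥ (c • x)) = c ^ 2 * (x ⬝ᵥ (S *ᵥ x)) := by
    rw [mulVec_smul, dotProduct_smul, smul_dotProduct]
    simp [smul_eq_mul]; ring
  rw [qf, this, show c ^ 2 = |c| ^ 2 by rw [sq_abs], Real.sqrt_mul (by positivity),
    Real.sqrt_sq (abs_nonneg c)]
  rfl

lemma vmv_mulVec (a b x : Fin n → ℝ) : vecMulVec a b *ᵥ x = (b ⬝ᵥ x) • a := by
  ext i
  simp [vecMulVec_apply, mulVec, dotProduct, Finset.sum_mul, Finset.mul_sum, mul_comm,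
    mul_left_comm]

lemma vmv_transpose (a b : Fin n → ℝ) : (vecMulVec a b)ᵀ = vecMulVec b a := by
  ext i j; simp [vecMulVec_apply, transpose_apply, mul_comm]

lemma dot_G (G : Matrix (Fin n) (Fin n) ℝ) (x y : Fin n → ℝ) :
    x ⬝ᵥ (G *ᵥ y) = (Gᵀ *ᵥ x) ⬝ᵥ y := by
  rw [dotProduct_mulVec, mulVec_transpose]

end Stmt9Aux

open Stmt9Aux

set_option maxHeartbeats 1600000 in
/-- Remainder-term bound, bounded case: For the Kalman filter recursions
`R_t = G C_{t−1} Gᵀ + W`, `Q_t = ⟨F, R_t F⟩ + v`, `A_t = R_t F/Q_t`,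
`C_t = R_t − Q_t A_t A_tᵀ`, `Z_t = G(I − A_t Fᵀ)` (for `t ≥ 1`, with `C_0` a symmetric
positive semidefinite initial covariance), `W` symmetric positive definite, `v > 0`,
assuming `R_t → R` entrywise with `R` a symmetric positive semidefinite solution of the
Riccati fixed-point equation: for any fixed `a_1` and bound `B_0 > 0` there exist
`ρ' ∈ (0,1)` and `c ≥ 0` such that for every sequence `Y` with `|Y_t| ≤ B_0`,
with `a_{t+1} = Y_t·G A_t + Z_t a_t` for `t ≥ 1`, one has for all `0 < s < t`:
`|⟨F, (Z_t Z_{t−1} ⋯ Z_{t−s})·a_{t−s}⟩| ≤ (ρ')ˢ·c`. -/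
theorem stmt_9 {n : ℕ} (hn : 1 ≤ n) (G W C0 : Matrix (Fin n) (Fin n) ℝ)
    (F a1 : Fin n → ℝ) (v : ℝ) (hv : 0 < v) (hW : W.PosDef) (hC0 : C0.PosSemidef)
    (Rm Cm : ℕ → Matrix (Fin n) (Fin n) ℝ) (Qm : ℕ → ℝ)
    (Am : ℕ → Fin n → ℝ) (Zm : ℕ → Matrix (Fin n) (Fin n) ℝ)
    (hCm0 : Cm 0 = C0)
    (hRm : ∀ t, Rm (t + 1) = G * Cm t * Gᵀ + W)
    (hQm : ∀ t, Qm (t + 1) = F ⬝ᵥ (Rm (t + 1) *ᵥ F) + v)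
    (hAm : ∀ t, Am (t + 1) = (Qm (t + 1))⁻¹ • (Rm (t + 1) *ᵥ F))
    (hCm : ∀ t, Cm (t + 1) =
      Rm (t + 1) - Qm (t + 1) • vecMulVec (Am (t + 1)) (Am (t + 1)))
    (hZm : ∀ t, Zm (t + 1) = G * (1 - vecMulVec (Am (t + 1)) F))
    (R : Matrix (Fin n) (Fin n) ℝ)
    (hconv : ∀ i j, Tendsto (fun t => Rm t i j) atTop (nhds (R i j)))
    (hR : R.PosSemidef)
    (hRic : R = G * (R - (F ⬝ᵥ (R *ᵥ F) + v)⁻¹ • vecMulVec (R *ᵥ F) (R *ᵥ F)) * Gᵀ + W)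
    (B0 : ℝ) (hB0 : 0 < B0) :
    ∃ ρ' c : ℝ, 0 < ρ' ∧ ρ' < 1 ∧ 0 ≤ c ∧
      ∀ Y : ℕ → ℝ, (∀ t, |Y t| ≤ B0) →
      ∀ a : ℕ → Fin n → ℝ, a 1 = a1 →
        (∀ t, 1 ≤ t → a (t + 1) = Y t • (G *ᵥ Am t) + Zm t *ᵥ a t) →
      ∀ s t : ℕ, 0 < s → s < t →
        |F ⬝ᵥ ((((List.range (s + 1)).map fun i => Zm (t - i)).prod) *ᵥ a (t - s))|
          ≤ ρ' ^ s * c := by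
  classical
  set Q : ℝ := F ⬝ᵥ (R *ᵥ F) + v with hQdef
  have hRFnn : 0 ≤ F ⬝ᵥ (R *ᵥ F) := psd_nonneg hR F
  have hQpos : 0 < Q := by rw [hQdef]; linarith
  have hQne : Q ≠ 0 := ne_of_gt hQpos
  have hRsymm : Rᵀ = R := by
    have := hR.1; rwa [IsHermitian, conjTranspose_eq_transpose_of_trivial] at this
  have hqric : ∀ x : Fin n → ℝ, x ⬝ᵥ (R *ᵥ x)
      = (Gᵀ *ᵥ x) ⬝ᵥ (R *ᵥ (Gᵀ *ᵥ x))
        - Q⁻¹ * ((Gᵀ *ᵥ x) ⬝ᵥ (R *ᵥ F)) ^ 2 + x ⬝ᵥ (W *ᵥ x) := by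
    intro x
    conv_lhs => rw [hRic]
    rw [add_mulVec, dotProduct_add, ← mulVec_mulVec, ← mulVec_mulVec, dot_G,
      sub_mulVec, smul_mulVec, vmv_mulVec]
    rw [dotProduct_sub, dotProduct_smul, dotProduct_smul,
      dotProduct_comm (R *ᵥ F) (Gᵀ *ᵥ x)]
    simp only [smul_eq_mul]
    ring
  have hWR : ∀ x : Fin n → ℝ, x ⬝ᵥ (W *ᵥ x) ≤ x ⬝ᵥ (R *ᵥ x) := by
    intro x
    have hg := psd_cs hR (Gᵀ *ᵥ x) F
    have hgnn := psd_nonneg hR (Gᵀ *ᵥ x)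
    have h1 : ((Gᵀ *ᵥ x) ⬝ᵥ (R *ᵥ F)) ^ 2 ≤ ((Gᵀ *ᵥ x) ⬝ᵥ (R *ᵥ (Gᵀ *ᵥ x))) * Q := by
      nlinarith
    have h2 := mul_le_mul_of_nonneg_left h1 (inv_nonneg.mpr hQpos.le)
    rw [show Q⁻¹ * (((Gᵀ *ᵥ x) ⬝ᵥ (R *ᵥ (Gᵀ *ᵥ x))) * Q)
        = ((Gᵀ *ᵥ x) ⬝ᵥ (R *ᵥ (Gᵀ *ᵥ x))) * (Q⁻¹ * Q) by ring, inv_mul_cancel₀ hQne,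
      mul_one] at h2
    have := hqric x
    linarith
  have hRpd : R.PosDef := by
    refine Matrix.PosDef.of_dotProduct_mulVec_pos hR.1 (fun x hx => ?_)
    have h1 := hW.dotProduct_mulVec_pos hx
    simp only [star_trivial] at h1 ⊢
    calc (0:ℝ) < x ⬝ᵥ (W *ᵥ x) := by exact_mod_cast h1
      _ ≤ x ⬝ᵥ (R *ᵥ x) := hWR x
  -- inverse
  set S : Matrix (Fin n) (Fin n) ℝ := R⁻¹ with hSdef
  have hSpd : S.PosDef := hRpd.inv
  have hSpsd : S.PosSemidef := hSpd.posSemidef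
  have hSsymm : Sᵀ = S := by
    have := hSpd.1; rwa [IsHermitian, conjTranspose_eq_transpose_of_trivial] at this
  have hdetR : IsUnit R.det := (Matrix.isUnit_iff_isUnit_det R).mp hRpd.isUnit
  have hRS : ∀ x : Fin n → ℝ, R *ᵥ (S *ᵥ x) = x := by
    intro x; rw [mulVec_mulVec, hSdef, mul_nonsing_inv R hdetR, one_mulVec]
  have hSR : ∀ x : Fin n → ℝ, S *ᵥ (R *ᵥ x) = x := by
    intro x; rw [mulVec_mulVec, hSdef, nonsing_inv_mul R hdetR, one_mulVec]
  -- constants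
  set cR : ℝ := Real.sqrt (sqEnt R) with hcRdef
  set cS : ℝ := Real.sqrt (sqEnt S) with hcSdef
  set cW : ℝ := Real.sqrt (sqEnt W⁻¹) with hcWdef
  have hcRnn : 0 ≤ cR := Real.sqrt_nonneg _
  have hcSnn : 0 ≤ cS := Real.sqrt_nonneg _
  have hcWnn : 0 ≤ cW := Real.sqrt_nonneg _
  have hdetW : IsUnit W.det := (Matrix.isUnit_iff_isUnit_det W).mp hW.isUnit
  have hdW : ∀ x : Fin n → ℝ, x ⬝ᵥ x ≤ cW * (x ⬝ᵥ (W *ᵥ x)) := by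
    intro x
    rcases eq_or_ne x 0 with rfl | hx
    · simp
    · have hx2 : x = W *ᵥ (W⁻¹ *ᵥ x) := by
        rw [mulVec_mulVec, mul_nonsing_inv W hdetW, one_mulVec]
      have h1 : (x ⬝ᵥ (W *ᵥ (W⁻¹ *ᵥ x))) ^ 2
          ≤ (x ⬝ᵥ (W *ᵥ x)) * ((W⁻¹ *ᵥ x) ⬝ᵥ (W *ᵥ (W⁻¹ *ᵥ x))) :=
        psd_cs hW.posSemidef _ _
      rw [← hx2] at h1
      have h2 : (W⁻¹ *ᵥ x) ⬝ᵥ x ≤ cW * (x ⬝ᵥ x) := by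
        rw [dotProduct_comm]; exact quad_le _ x
      have hd := dot_self_pos hx
      have hwq := psd_nonneg hW.posSemidef x
      have h7 := mul_le_mul_of_nonneg_left h2 hwq
      nlinarith
  have hdRq : ∀ x : Fin n → ℝ, x ⬝ᵥ (R *ᵥ x) ≤ cR * (x ⬝ᵥ x) := fun x => quad_le R x
  set α : ℝ := (cR * cW + 1)⁻¹ with hαdef
  have hcc : (0:ℝ) < cR * cW + 1 := by nlinarith
  have hαpos : 0 < α := by rw [hαdef]; exact inv_pos.mpr hcc
  have hα1 : α ≤ 1 := by
    rw [hαdef]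
    have : (1:ℝ) ≤ cR * cW + 1 := by nlinarith
    exact inv_le_one_of_one_le₀ this
  have hαR : ∀ x : Fin n → ℝ, α * (x ⬝ᵥ (R *ᵥ x)) ≤ x ⬝ᵥ (W *ᵥ x) := by
    intro x
    have h1 : x ⬝ᵥ (R *ᵥ x) ≤ (cR * cW + 1) * (x ⬝ᵥ (W *ᵥ x)) := by
      have ha := hdW x; have hb := hdRq x
      have hc := psd_nonneg hW.posSemidef x
      have hd := dot_self_nonneg x
      nlinarith
    have h3 : α * (cR * cW + 1) = 1 := by rw [hαdef]; exact inv_mul_cancel₀ (ne_of_gt hcc)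
    calc α * (x ⬝ᵥ (R *ᵥ x)) ≤ α * ((cR * cW + 1) * (x ⬝ᵥ (W *ᵥ x))) :=
          mul_le_mul_of_nonneg_left h1 hαpos.le
      _ = (α * (cR * cW + 1)) * (x ⬝ᵥ (W *ᵥ x)) := by ring
      _ = x ⬝ᵥ (W *ᵥ x) := by rw [h3, one_mul]
  set β : ℝ := 1 - α with hβdef
  have hβnn : 0 ≤ β := by rw [hβdef]; linarith
  have hβlt : β < 1 := by rw [hβdef]; linarith
  -- Z and its transpose
  set A : Fin n → ℝ := Q⁻¹ • (R *ᵥ F) with hAdef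
  set Z : Matrix (Fin n) (Fin n) ℝ := G * (1 - vecMulVec A F) with hZdef
  have hZT : ∀ y : Fin n → ℝ,
      Zᵀ *ᵥ y = (Gᵀ *ᵥ y) - (Q⁻¹ * ((Gᵀ *ᵥ y) ⬝ᵥ (R *ᵥ F))) • F := by
    intro y
    rw [hZdef, transpose_mul, ← mulVec_mulVec, transpose_sub, transpose_one, vmv_transpose,
      sub_mulVec, one_mulVec, vmv_mulVec, hAdef, smul_dotProduct,
      dotProduct_comm (R *ᵥ F) (Gᵀ *ᵥ y)]
    rfl
  have hZTc : ∀ y : Fin n → ℝ,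
      (Zᵀ *ᵥ y) ⬝ᵥ (R *ᵥ (Zᵀ *ᵥ y)) ≤ β * (y ⬝ᵥ (R *ᵥ y)) := by
    intro y
    rw [hZT y]
    set g : Fin n → ℝ := Gᵀ *ᵥ y with hgdef
    set p : ℝ := g ⬝ᵥ (R *ᵥ F) with hpdef
    set c : ℝ := Q⁻¹ * p with hcdef
    have hFRg : F ⬝ᵥ (R *ᵥ g) = p := by rw [hpdef]; exact (symm_dot hRsymm g F).symm
    have hFRF : F ⬝ᵥ (R *ᵥ F) = Q - v := by rw [hQdef]; ring
    have expand : (g - c • F) ⬝ᵥ (R *ᵥ (g - c • F))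
        = g ⬝ᵥ (R *ᵥ g) - 2 * c * p + c ^ 2 * (Q - v) := by
      rw [mulVec_sub, mulVec_smul, dotProduct_sub, sub_dotProduct, sub_dotProduct,
        dotProduct_smul, smul_dotProduct, smul_dotProduct, dotProduct_smul, hFRg, hFRF,
        ← hpdef]
      simp only [smul_eq_mul]
      ring
    rw [expand]
    have hq := hqric y
    rw [← hgdef, ← hpdef] at hq
    have hQQ : Q⁻¹ * Q = 1 := inv_mul_cancel₀ hQne
    have hvp : 0 ≤ v * (Q⁻¹ * p) ^ 2 := by positivity
    have key : g ⬝ᵥ (R *ᵥ g) - 2 * c * p + c ^ 2 * (Q - v)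
        = y ⬝ᵥ (R *ᵥ y) - y ⬝ᵥ (W *ᵥ y) - v * (Q⁻¹ * p) ^ 2 := by
      rw [hcdef]
      have hg2 : g ⬝ᵥ (R *ᵥ g) = y ⬝ᵥ (R *ᵥ y) + Q⁻¹ * p ^ 2 - y ⬝ᵥ (W *ᵥ y) := by
        linarith
      rw [hg2]
      field_simp
      ring
    rw [key, hβdef]
    have := hαR y
    linarith
  -- contraction of Z in the S-quadratic form
  have hZc : ∀ x : Fin n → ℝ,
      (Z *ᵥ x) ⬝ᵥ (S *ᵥ (Z *ᵥ x)) ≤ β * (x ⬝ᵥ (S *ᵥ x)) := by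
    intro x
    set z : Fin n → ℝ := Z *ᵥ x with hzdef
    set y : Fin n → ℝ := S *ᵥ z with hydef
    have e1 : y ⬝ᵥ (R *ᵥ y) = z ⬝ᵥ (S *ᵥ z) := by
      rw [hydef, hRS z, dotProduct_comm]
    have e2 : z ⬝ᵥ (S *ᵥ z) = (Zᵀ *ᵥ y) ⬝ᵥ x := by
      rw [show z ⬝ᵥ (S *ᵥ z) = y ⬝ᵥ z from (dotProduct_comm _ _), hzdef,
        dotProduct_mulVec, mulVec_transpose]
    have e3 : ((Zᵀ *ᵥ y) ⬝ᵥ x) ^ 2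
        ≤ ((Zᵀ *ᵥ y) ⬝ᵥ (R *ᵥ (Zᵀ *ᵥ y))) * (x ⬝ᵥ (S *ᵥ x)) := by
      have h4 : (Zᵀ *ᵥ y) ⬝ᵥ x = (Zᵀ *ᵥ y) ⬝ᵥ (R *ᵥ (S *ᵥ x)) := by rw [hRS x]
      have h5 := psd_cs hR (Zᵀ *ᵥ y) (S *ᵥ x)
      have h6 : (S *ᵥ x) ⬝ᵥ (R *ᵥ (S *ᵥ x)) = x ⬝ᵥ (S *ᵥ x) := by
        rw [hRS x, dotProduct_comm]
      rw [h4, ← h6]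
      exact h5
    have e4 := hZTc y
    rw [e1] at e4
    have hzz : 0 ≤ z ⬝ᵥ (S *ᵥ z) := psd_nonneg hSpsd z
    have hxx : 0 ≤ x ⬝ᵥ (S *ᵥ x) := psd_nonneg hSpsd x
    have hgoal : z ⬝ᵥ (S *ᵥ z) ≤ β * (x ⬝ᵥ (S *ᵥ x)) := by
      rcases eq_or_lt_of_le hzz with hz0 | hz0
      · rw [← hz0]; positivity
      · have e5 : (z ⬝ᵥ (S *ᵥ z)) ^ 2
            ≤ ((Zᵀ *ᵥ y) ⬝ᵥ (R *ᵥ (Zᵀ *ᵥ y))) * (x ⬝ᵥ (S *ᵥ x)) := by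
          rw [e2]; exact e3
        nlinarith
    exact hgoal
  -- euclidean norm comparison from below
  have hdq : ∀ x : Fin n → ℝ, x ⬝ᵥ x ≤ cR * (x ⬝ᵥ (S *ᵥ x)) := by
    intro x
    rcases eq_or_ne x 0 with rfl | hx
    · simp
    · have h0 : x ⬝ᵥ x = x ⬝ᵥ (R *ᵥ (S *ᵥ x)) := by rw [hRS x]
      have h5 := psd_cs hR x (S *ᵥ x)
      have h6 : (S *ᵥ x) ⬝ᵥ (R *ᵥ (S *ᵥ x)) = x ⬝ᵥ (S *ᵥ x) := by
        rw [hRS x, dotProduct_comm]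
      rw [h6, ← h0] at h5
      have hd := dot_self_pos hx
      have hb := hdRq x
      have hqq := psd_nonneg hSpsd x
      have h7 := mul_le_mul_of_nonneg_right hb hqq
      nlinarith
  -- general operator bound in the qf S norm
  have hqmv : ∀ (M : Matrix (Fin n) (Fin n) ℝ) (x : Fin n → ℝ),
      qf S (M *ᵥ x) ≤ Real.sqrt (cS * (sqEnt M * cR)) * qf S x := by
    intro M x
    have h1 : (M *ᵥ x) ⬝ᵥ (S *ᵥ (M *ᵥ x)) ≤ cS * (sqEnt M * cR) * (x ⬝ᵥ (S *ᵥ x)) := by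
      calc (M *ᵥ x) ⬝ᵥ (S *ᵥ (M *ᵥ x)) ≤ cS * ((M *ᵥ x) ⬝ᵥ (M *ᵥ x)) := quad_le S _
        _ ≤ cS * (sqEnt M * (x ⬝ᵥ x)) :=
            mul_le_mul_of_nonneg_left (mulVec_self_le M x) hcSnn
        _ ≤ cS * (sqEnt M * (cR * (x ⬝ᵥ (S *ᵥ x)))) := by
            refine mul_le_mul_of_nonneg_left
              (mul_le_mul_of_nonneg_left (hdq x) (sqEnt_nonneg M)) hcSnn
        _ = cS * (sqEnt M * cR) * (x ⬝ᵥ (S *ᵥ x)) := by ring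
    calc qf S (M *ᵥ x) = Real.sqrt ((M *ᵥ x) ⬝ᵥ (S *ᵥ (M *ᵥ x))) := rfl
      _ ≤ Real.sqrt (cS * (sqEnt M * cR) * (x ⬝ᵥ (S *ᵥ x))) := Real.sqrt_le_sqrt h1
      _ = Real.sqrt (cS * (sqEnt M * cR)) * qf S x := by
          rw [Real.sqrt_mul (mul_nonneg hcSnn (mul_nonneg (sqEnt_nonneg M) hcRnn))]; rfl
  -- bound of |F ⬝ᵥ w| by qf S w
  have hFdot : ∀ w : Fin n → ℝ,
      |F ⬝ᵥ w| ≤ Real.sqrt (F ⬝ᵥ F) * (Real.sqrt cR * qf S w) := by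
    intro w
    have h1 : (F ⬝ᵥ w) ^ 2 ≤ (F ⬝ᵥ F) * (cR * (w ⬝ᵥ (S *ᵥ w))) := by
      calc (F ⬝ᵥ w) ^ 2 ≤ (F ⬝ᵥ F) * (w ⬝ᵥ w) := dot_cs F w
        _ ≤ (F ⬝ᵥ F) * (cR * (w ⬝ᵥ (S *ᵥ w))) :=
            mul_le_mul_of_nonneg_left (hdq w) (dot_self_nonneg F)
    calc |F ⬝ᵥ w| = Real.sqrt ((F ⬝ᵥ w) ^ 2) := (Real.sqrt_sq_eq_abs _).symm
      _ ≤ Real.sqrt ((F ⬝ᵥ F) * (cR * (w ⬝ᵥ (S *ᵥ w)))) := Real.sqrt_le_sqrt h1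
      _ = Real.sqrt (F ⬝ᵥ F) * (Real.sqrt cR * qf S w) := by
          rw [Real.sqrt_mul (dot_self_nonneg F), Real.sqrt_mul hcRnn]; rfl
  -- convergence of the filter matrices
  have hRconv' : ∀ i j, Tendsto (fun u => Rm (u + 1) i j) atTop (𝓝 (R i j)) :=
    fun i j => (hconv i j).comp (tendsto_add_atTop_nat 1)
  have hQconv : Tendsto (fun u => Qm (u + 1)) atTop (𝓝 Q) := by
    have hform : ∀ u, Qm (u + 1) = (∑ i, F i * ∑ j, Rm (u + 1) i j * F j) + v := by
      intro u; rw [hQm]; simp [dotProduct, mulVec]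
    have hQform : Q = (∑ i, F i * ∑ j, R i j * F j) + v := by
      rw [hQdef]; simp [dotProduct, mulVec]
    rw [hQform]
    simp only [hform]
    exact (tendsto_finset_sum _ (fun i _ => tendsto_const_nhds.mul
      (tendsto_finset_sum _ (fun j _ => (hRconv' i j).mul tendsto_const_nhds)))).add
      tendsto_const_nhds
  have hAconv : ∀ k, Tendsto (fun u => Am (u + 1) k) atTop (𝓝 (A k)) := by
    intro k
    have hform : ∀ u, Am (u + 1) k = (Qm (u + 1))⁻¹ * ∑ j, Rm (u + 1) k j * F j := by
      intro u; rw [hAm]; simp [mulVec, dotProduct]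
    have hAform : A k = Q⁻¹ * ∑ j, R k j * F j := by
      rw [hAdef]; simp [mulVec, dotProduct]
    rw [hAform]
    simp only [hform]
    exact (hQconv.inv₀ hQne).mul
      (tendsto_finset_sum _ (fun j _ => (hRconv' k j).mul tendsto_const_nhds))
  have hZconvE : ∀ i j, Tendsto (fun u => Zm (u + 1) i j) atTop (𝓝 (Z i j)) := by
    intro i j
    have hform : ∀ u, Zm (u + 1) i j
        = ∑ k, G i k * ((1 : Matrix (Fin n) (Fin n) ℝ) k j - Am (u + 1) k * F j) := by
      intro u; rw [hZm]; simp [Matrix.mul_apply, Matrix.sub_apply, vecMulVec_apply]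
    have hZform : Z i j
        = ∑ k, G i k * ((1 : Matrix (Fin n) (Fin n) ℝ) k j - A k * F j) := by
      rw [hZdef]; simp [Matrix.mul_apply, Matrix.sub_apply, vecMulVec_apply]
    rw [hZform]
    simp only [hform]
    exact tendsto_finset_sum _ (fun k _ => tendsto_const_nhds.mul
      (tendsto_const_nhds.sub ((hAconv k).mul tendsto_const_nhds)))
  have hEconv : Tendsto (fun u => sqEnt (Zm (u + 1) - Z)) atTop (𝓝 0) := by
    have h0 : (0 : ℝ) = ∑ i : Fin n, ∑ j : Fin n, (Z i j - Z i j) ^ 2 := by simp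
    rw [h0]
    have hform : ∀ u, sqEnt (Zm (u + 1) - Z)
        = ∑ i : Fin n, ∑ j : Fin n, (Zm (u + 1) i j - Z i j) ^ 2 := by
      intro u; rw [sqEnt]; simp [Matrix.sub_apply]
    simp only [hform]
    exact tendsto_finset_sum _ (fun i _ => tendsto_finset_sum _ (fun j _ =>
      ((hZconvE i j).sub tendsto_const_nhds).pow 2))
  set e : ℕ → ℝ := fun u => Real.sqrt (cS * (sqEnt (Zm (u + 1) - Z) * cR)) with hedef
  have he_nonneg : ∀ u, 0 ≤ e u := fun u => Real.sqrt_nonneg _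
  have he0 : Tendsto e atTop (𝓝 0) := by
    have h1 : Tendsto (fun u => cS * (sqEnt (Zm (u + 1) - Z) * cR)) atTop
        (𝓝 (cS * (0 * cR))) :=
      tendsto_const_nhds.mul (hEconv.mul tendsto_const_nhds)
    rw [show cS * ((0:ℝ) * cR) = 0 by ring] at h1
    have h2 := (Real.continuous_sqrt.tendsto 0).comp h1
    simpa [hedef, Function.comp_def] using h2
  -- contraction constants
  set ρ₀ : ℝ := Real.sqrt β with hρ₀def
  have hρ₀nn : 0 ≤ ρ₀ := Real.sqrt_nonneg _
  have hρ₀lt : ρ₀ < 1 := by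
    rw [hρ₀def]
    have := Real.sqrt_lt_sqrt hβnn hβlt
    rwa [Real.sqrt_one] at this
  have hqZ : ∀ x : Fin n → ℝ, qf S (Z *ᵥ x) ≤ ρ₀ * qf S x := by
    intro x
    calc qf S (Z *ᵥ x) = Real.sqrt ((Z *ᵥ x) ⬝ᵥ (S *ᵥ (Z *ᵥ x))) := rfl
      _ ≤ Real.sqrt (β * (x ⬝ᵥ (S *ᵥ x))) := Real.sqrt_le_sqrt (hZc x)
      _ = ρ₀ * qf S x := by rw [Real.sqrt_mul hβnn]; rfl
  set ρ₁ : ℝ := (1 + ρ₀) / 2 with hρ₁def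
  have hρ₁pos : 0 < ρ₁ := by rw [hρ₁def]; linarith
  have hρ₁lt : ρ₁ < 1 := by rw [hρ₁def]; linarith
  have hρ₀ρ₁ : ρ₀ < ρ₁ := by rw [hρ₁def]; linarith
  -- one-step bounds
  have hstep_all : ∀ u (x : Fin n → ℝ),
      qf S (Zm (u + 1) *ᵥ x) ≤ (ρ₀ + e u) * qf S x := by
    intro u x
    have hsplit : Zm (u + 1) *ᵥ x = Z *ᵥ x + (Zm (u + 1) - Z) *ᵥ x := by
      rw [sub_mulVec]; abel
    calc qf S (Zm (u + 1) *ᵥ x) = qf S (Z *ᵥ x + (Zm (u + 1) - Z) *ᵥ x) := by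
          rw [hsplit]
      _ ≤ qf S (Z *ᵥ x) + qf S ((Zm (u + 1) - Z) *ᵥ x) := qf_add_le hSpsd _ _
      _ ≤ ρ₀ * qf S x + e u * qf S x := add_le_add (hqZ x) (hqmv _ x)
      _ = (ρ₀ + e u) * qf S x := by ring
  obtain ⟨T, hT⟩ : ∃ T, ∀ u, T ≤ u → e u < (1 - ρ₀) / 2 := by
    have h1 : ∀ᶠ u in atTop, e u < (1 - ρ₀) / 2 :=
      he0.eventually_lt_const (by linarith)
    exact eventually_atTop.mp h1
  set T₁ : ℕ := T + 1 with hT₁def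
  have hstepT : ∀ u, T₁ ≤ u → ∀ x : Fin n → ℝ, qf S (Zm u *ᵥ x) ≤ ρ₁ * qf S x := by
    intro u hu x
    obtain ⟨w, rfl⟩ : ∃ w, u = w + 1 := ⟨u - 1, by omega⟩
    · have h1 := hstep_all w x
      have h2 := hT w (by omega)
      have h3 : ρ₀ + e w ≤ ρ₁ := by rw [hρ₁def]; linarith
      calc qf S (Zm (w + 1) *ᵥ x) ≤ (ρ₀ + e w) * qf S x := h1
        _ ≤ ρ₁ * qf S x := mul_le_mul_of_nonneg_right h3 (qf_nonneg _ _)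
  obtain ⟨Ce, hCe⟩ := he0.bddAbove_range
  have hCe' : ∀ u, e u ≤ Ce := fun u => hCe ⟨u, rfl⟩
  have hCenn : 0 ≤ Ce := le_trans (he_nonneg 0) (hCe' 0)
  set K : ℝ := ρ₀ + Ce + 1 with hKdef
  have hK1 : 1 ≤ K := by rw [hKdef]; linarith
  have hKpos : 0 < K := by linarith
  have hρ₁K : ρ₁ ≤ K := by linarith
  have hstepK : ∀ u, 1 ≤ u → ∀ x : Fin n → ℝ, qf S (Zm u *ᵥ x) ≤ K * qf S x := by
    intro u hu x
    obtain ⟨w, rfl⟩ : ∃ w, u = w + 1 := ⟨u - 1, by omega⟩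
    · have h1 := hstep_all w x
      have h3 : ρ₀ + e w ≤ K := by rw [hKdef]; have := hCe' w; linarith
      calc qf S (Zm (w + 1) *ᵥ x) ≤ (ρ₀ + e w) * qf S x := h1
        _ ≤ K * qf S x := mul_le_mul_of_nonneg_right h3 (qf_nonneg _ _)
  -- bound on the control input
  have hGAconv : Tendsto (fun u => (G *ᵥ Am (u + 1)) ⬝ᵥ (G *ᵥ Am (u + 1))) atTop
      (𝓝 ((G *ᵥ A) ⬝ᵥ (G *ᵥ A))) := by
    have hGAc : ∀ i, Tendsto (fun u => (G *ᵥ Am (u + 1)) i) atTop (𝓝 ((G *ᵥ A) i)) := by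
      intro i
      have hform : ∀ u, (G *ᵥ Am (u + 1)) i = ∑ j, G i j * Am (u + 1) j := by
        intro u; simp [mulVec, dotProduct]
      have hform2 : (G *ᵥ A) i = ∑ j, G i j * A j := by simp [mulVec, dotProduct]
      rw [hform2]; simp only [hform]
      exact tendsto_finset_sum _ (fun j _ => tendsto_const_nhds.mul (hAconv j))
    have hform : ∀ u, (G *ᵥ Am (u + 1)) ⬝ᵥ (G *ᵥ Am (u + 1))
        = ∑ i, (G *ᵥ Am (u + 1)) i * (G *ᵥ Am (u + 1)) i := by
      intro u; rfl
    have hform2 : (G *ᵥ A) ⬝ᵥ (G *ᵥ A) = ∑ i, (G *ᵥ A) i * (G *ᵥ A) i := rfl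
    rw [hform2]; simp only [hform]
    exact tendsto_finset_sum _ (fun i _ => (hGAc i).mul (hGAc i))
  obtain ⟨CD, hCD⟩ := hGAconv.bddAbove_range
  have hCD' : ∀ u, (G *ᵥ Am (u + 1)) ⬝ᵥ (G *ᵥ Am (u + 1)) ≤ CD := fun u => hCD ⟨u, rfl⟩
  have hCDnn : 0 ≤ CD := le_trans (dot_self_nonneg _) (hCD' 0)
  set D : ℝ := Real.sqrt cS * Real.sqrt CD with hDdef
  have hDnn : 0 ≤ D := by rw [hDdef]; positivity
  have hD : ∀ u, 1 ≤ u → qf S (G *ᵥ Am u) ≤ D := by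
    intro u hu
    obtain ⟨w, rfl⟩ : ∃ w, u = w + 1 := ⟨u - 1, by omega⟩
    · have h1 : (G *ᵥ Am (w + 1)) ⬝ᵥ (S *ᵥ (G *ᵥ Am (w + 1)))
          ≤ cS * CD := by
        calc (G *ᵥ Am (w + 1)) ⬝ᵥ (S *ᵥ (G *ᵥ Am (w + 1)))
            ≤ cS * ((G *ᵥ Am (w + 1)) ⬝ᵥ (G *ᵥ Am (w + 1))) := quad_le S _
          _ ≤ cS * CD := mul_le_mul_of_nonneg_left (hCD' w) hcSnn
      calc qf S (G *ᵥ Am (w + 1)) ≤ Real.sqrt (cS * CD) := Real.sqrt_le_sqrt h1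
        _ = D := by rw [hDdef, Real.sqrt_mul hcSnn]
  -- product decomposition
  have hbase : ∀ t' : ℕ, (((List.range 1).map fun i => Zm (t' - i)).prod) = Zm t' := by
    intro t'; simp [List.range_succ]
  have hProdSucc : ∀ (s' t' : ℕ),
      (((List.range (s' + 1 + 1)).map fun i => Zm (t' - i)).prod)
        = Zm t' * (((List.range (s' + 1)).map fun i => Zm (t' - 1 - i)).prod) := by
    intro s' t'
    rw [List.range_succ_eq_map, List.map_cons, List.prod_cons, List.map_map]
    have h1 : ((fun i => Zm (t' - i)) ∘ Nat.succ) = fun i => Zm (t' - 1 - i) := by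
      funext i; exact congrArg Zm (by omega)
    rw [h1, Nat.sub_zero]
  -- crude product bound
  have hcrude : ∀ s' : ℕ, ∀ t' : ℕ, s' + 1 ≤ t' → ∀ x : Fin n → ℝ,
      qf S ((((List.range (s' + 1)).map fun i => Zm (t' - i)).prod) *ᵥ x)
        ≤ K ^ (s' + 1) * qf S x := by
    intro s'
    induction s' with
    | zero =>
      intro t' ht x
      rw [hbase t', pow_one]
      exact hstepK t' ht x
    | succ m ih =>
      intro t' ht x
      rw [hProdSucc m t', ← mulVec_mulVec]
      calc qf S (Zm t' *ᵥ ((((List.range (m + 1)).map fun i => Zm (t' - 1 - i)).prod) *ᵥ x))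
          ≤ K * qf S ((((List.range (m + 1)).map fun i => Zm (t' - 1 - i)).prod) *ᵥ x) :=
            hstepK t' (by omega) _
        _ ≤ K * (K ^ (m + 1) * qf S x) :=
            mul_le_mul_of_nonneg_left (ih (t' - 1) (by omega) x) hKpos.le
        _ = K ^ (m + 1 + 1) * qf S x := by ring
  -- refined product bound
  have hρT : 0 < ρ₁ ^ T₁ := pow_pos hρ₁pos T₁
  have hKm : ∀ m : ℕ, m ≤ T₁ → K ^ m ≤ K ^ T₁ * (ρ₁ ^ T₁)⁻¹ * ρ₁ ^ m := by
    intro m hm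
    have h1 : K ^ m ≤ K ^ T₁ := pow_le_pow_right₀ hK1 hm
    have h2 : ρ₁ ^ T₁ ≤ ρ₁ ^ m := pow_le_pow_of_le_one hρ₁pos.le hρ₁lt.le hm
    have h3 : (1:ℝ) ≤ (ρ₁ ^ T₁)⁻¹ * ρ₁ ^ m := by
      rw [← div_eq_inv_mul, le_div_iff₀ hρT, one_mul]
      exact h2
    calc K ^ m ≤ K ^ T₁ := h1
      _ = K ^ T₁ * 1 := (mul_one _).symm
      _ ≤ K ^ T₁ * ((ρ₁ ^ T₁)⁻¹ * ρ₁ ^ m) :=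
          mul_le_mul_of_nonneg_left h3 (pow_nonneg hKpos.le _)
      _ = K ^ T₁ * (ρ₁ ^ T₁)⁻¹ * ρ₁ ^ m := by ring
  have hmain : ∀ s' : ℕ, ∀ t' : ℕ, s' + 1 ≤ t' → ∀ x : Fin n → ℝ,
      qf S ((((List.range (s' + 1)).map fun i => Zm (t' - i)).prod) *ᵥ x)
        ≤ K ^ T₁ * (ρ₁ ^ T₁)⁻¹ * ρ₁ ^ (s' + 1) * qf S x := by
    intro s'
    induction s' with
    | zero =>
      intro t' ht x
      rw [hbase t']
      calc qf S (Zm t' *ᵥ x) ≤ K * qf S x := hstepK t' ht x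
        _ ≤ K ^ T₁ * (ρ₁ ^ T₁)⁻¹ * ρ₁ ^ (0 + 1) * qf S x := by
            refine mul_le_mul_of_nonneg_right ?_ (qf_nonneg _ _)
            have := hKm 1 (by omega)
            simpa using this
    | succ m ih =>
      intro t' ht x
      rcases le_or_gt T₁ t' with hcase | hcase
      · rw [hProdSucc m t', ← mulVec_mulVec]
        calc qf S (Zm t' *ᵥ ((((List.range (m + 1)).map fun i => Zm (t' - 1 - i)).prod) *ᵥ x))
            ≤ ρ₁ * qf S ((((List.range (m + 1)).map fun i => Zm (t' - 1 - i)).prod) *ᵥ x) :=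
              hstepT t' hcase _
          _ ≤ ρ₁ * (K ^ T₁ * (ρ₁ ^ T₁)⁻¹ * ρ₁ ^ (m + 1) * qf S x) :=
              mul_le_mul_of_nonneg_left (ih (t' - 1) (by omega) x) hρ₁pos.le
          _ = K ^ T₁ * (ρ₁ ^ T₁)⁻¹ * ρ₁ ^ (m + 1 + 1) * qf S x := by ring
      · calc qf S ((((List.range (m + 1 + 1)).map fun i => Zm (t' - i)).prod) *ᵥ x)
            ≤ K ^ (m + 1 + 1) * qf S x := hcrude (m + 1) t' ht x
          _ ≤ K ^ T₁ * (ρ₁ ^ T₁)⁻¹ * ρ₁ ^ (m + 1 + 1) * qf S x :=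
              mul_le_mul_of_nonneg_right (hKm (m + 1 + 1) (by omega)) (qf_nonneg _ _)
  -- global constants
  set BD : ℝ := B0 * D with hBDdef
  have hBDnn : 0 ≤ BD := mul_nonneg hB0.le hDnn
  set CK : ℝ := K ^ T₁ * (ρ₁ ^ T₁)⁻¹ with hCKdef
  have hCKpos : 0 < CK := mul_pos (pow_pos hKpos T₁) (inv_pos.mpr hρT)
  have hdivnn : 0 ≤ BD / (1 - ρ₁) := div_nonneg hBDnn (by linarith)
  have hKT₁nn : (0:ℝ) ≤ K ^ T₁ := (pow_pos hKpos T₁).le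
  set AB : ℝ := K ^ T₁ * qf S a1 + (T₁ : ℝ) * K ^ T₁ * BD + BD / (1 - ρ₁) with hABdef
  have hABnn : 0 ≤ AB := by
    rw [hABdef]
    exact add_nonneg (add_nonneg (mul_nonneg hKT₁nn (qf_nonneg S a1))
      (mul_nonneg (mul_nonneg (Nat.cast_nonneg T₁) hKT₁nn) hBDnn)) hdivnn
  refine ⟨ρ₁, Real.sqrt (F ⬝ᵥ F) * Real.sqrt cR * (CK * ρ₁ * AB), hρ₁pos, hρ₁lt,
    mul_nonneg (mul_nonneg (Real.sqrt_nonneg _) (Real.sqrt_nonneg _))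
      (mul_nonneg (mul_nonneg hCKpos.le hρ₁pos.le) hABnn), ?_⟩
  intro Y hY a ha1 harec
  -- one step of the recursion
  have haq : ∀ u, 1 ≤ u → qf S (a (u + 1)) ≤ BD + qf S (Zm u *ᵥ a u) := by
    intro u hu
    rw [harec u hu]
    have h1 : qf S (Y u • (G *ᵥ Am u)) = |Y u| * qf S (G *ᵥ Am u) := qf_smul S _ _
    have h2 : |Y u| * qf S (G *ᵥ Am u) ≤ B0 * D :=
      mul_le_mul (hY u) (hD u hu) (qf_nonneg _ _) hB0.le
    calc qf S (Y u • (G *ᵥ Am u) + Zm u *ᵥ a u)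
        ≤ qf S (Y u • (G *ᵥ Am u)) + qf S (Zm u *ᵥ a u) := qf_add_le hSpsd _ _
      _ ≤ BD + qf S (Zm u *ᵥ a u) := by rw [hBDdef]; linarith only [h1, h2]
  -- growth bound during the initial phase
  have hA1 : ∀ m : ℕ, qf S (a (1 + m)) ≤ K ^ m * qf S a1 + (m : ℝ) * K ^ m * BD := by
    intro m
    induction m with
    | zero => simp [ha1]
    | succ m ih =>
      have hrec := haq (1 + m) (by omega)
      have hstep := hstepK (1 + m) (by omega) (a (1 + m))
      have hpow : (1:ℝ) ≤ K ^ (m + 1) := one_le_pow₀ hK1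
      have heq : 1 + (m + 1) = (1 + m) + 1 := by omega
      rw [heq]
      have hh : qf S (a ((1 + m) + 1))
          ≤ BD + K * (K ^ m * qf S a1 + (m : ℝ) * K ^ m * BD) := by
        calc qf S (a ((1 + m) + 1)) ≤ BD + qf S (Zm (1 + m) *ᵥ a (1 + m)) := hrec
          _ ≤ BD + K * qf S (a (1 + m)) := by linarith only [hrec, hstep]
          _ ≤ BD + K * (K ^ m * qf S a1 + (m : ℝ) * K ^ m * BD) :=
              add_le_add_right (mul_le_mul_of_nonneg_left ih hKpos.le) BD
      have hBD2 : BD ≤ K ^ (m + 1) * BD := by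
        calc BD = 1 * BD := (one_mul BD).symm
          _ ≤ K ^ (m + 1) * BD := mul_le_mul_of_nonneg_right hpow hBDnn
      have hring : K * (K ^ m * qf S a1 + (m : ℝ) * K ^ m * BD)
          = K ^ (m + 1) * qf S a1 + (m : ℝ) * K ^ (m + 1) * BD := by ring
      push_cast
      linarith only [hh, hBD2, hring]
  -- contraction phase
  have hA2 : ∀ m : ℕ, qf S (a (T₁ + m)) ≤ ρ₁ ^ m * qf S (a T₁) + BD / (1 - ρ₁) := by
    intro m
    induction m with
    | zero => simp only [Nat.add_zero, pow_zero, one_mul]; linarith only [hdivnn]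
    | succ m ih =>
      have heq : T₁ + (m + 1) = (T₁ + m) + 1 := by omega
      rw [heq]
      have hrec := haq (T₁ + m) (by omega)
      have hstep := hstepT (T₁ + m) (by omega) (a (T₁ + m))
      have hne : (1:ℝ) - ρ₁ ≠ 0 := ne_of_gt (by linarith only [hρ₁lt])
      have hdiv : (1 - ρ₁) * (BD / (1 - ρ₁)) = BD := by
        rw [mul_comm, div_mul_cancel₀ _ hne]
      have hring : ρ₁ * (ρ₁ ^ m * qf S (a T₁)) = ρ₁ ^ (m + 1) * qf S (a T₁) := by ring
      have hh : qf S (a ((T₁ + m) + 1))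
          ≤ BD + ρ₁ * (ρ₁ ^ m * qf S (a T₁) + BD / (1 - ρ₁)) := by
        calc qf S (a ((T₁ + m) + 1)) ≤ BD + qf S (Zm (T₁ + m) *ᵥ a (T₁ + m)) := hrec
          _ ≤ BD + ρ₁ * qf S (a (T₁ + m)) := by linarith only [hrec, hstep]
          _ ≤ BD + ρ₁ * (ρ₁ ^ m * qf S (a T₁) + BD / (1 - ρ₁)) :=
              add_le_add_right (mul_le_mul_of_nonneg_left ih hρ₁pos.le) BD
      linarith only [hh, hdiv, hring]
  -- uniform bound on the sequence
  have hABu : ∀ u, 1 ≤ u → qf S (a u) ≤ AB := by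
    intro u hu
    rcases le_or_gt u T₁ with hcase | hcase
    · obtain ⟨m, rfl⟩ : ∃ m, u = 1 + m := ⟨u - 1, by omega⟩
      have h1 := hA1 m
      have hm : m ≤ T₁ := by omega
      have h2 : K ^ m ≤ K ^ T₁ := pow_le_pow_right₀ hK1 hm
      have h3 : (m:ℝ) * K ^ m ≤ (T₁:ℝ) * K ^ T₁ := by
        have hmr : (m:ℝ) ≤ (T₁:ℝ) := by exact_mod_cast hm
        have h0 : (0:ℝ) ≤ K ^ m := (pow_pos hKpos m).le
        exact mul_le_mul hmr h2 h0 (Nat.cast_nonneg T₁)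
      rw [hABdef]
      have h4 := mul_le_mul_of_nonneg_right h2 (qf_nonneg S a1)
      have h5 := mul_le_mul_of_nonneg_right h3 hBDnn
      linarith only [h1, h4, h5, hdivnn]
    · obtain ⟨m, rfl⟩ : ∃ m, u = T₁ + m := ⟨u - T₁, by omega⟩
      have h1 := hA2 m
      have h2 : ρ₁ ^ m ≤ 1 := pow_le_one₀ hρ₁pos.le hρ₁lt.le
      have h3 : ρ₁ ^ m * qf S (a T₁) ≤ qf S (a T₁) := by
        calc ρ₁ ^ m * qf S (a T₁) ≤ 1 * qf S (a T₁) :=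
              mul_le_mul_of_nonneg_right h2 (qf_nonneg S (a T₁))
          _ = qf S (a T₁) := one_mul _
      have hT1 : T₁ = 1 + T := by omega
      have h4 : qf S (a T₁) ≤ K ^ T * qf S a1 + (T:ℝ) * K ^ T * BD := by
        rw [hT1]; exact hA1 T
      have h5 : K ^ T ≤ K ^ T₁ := pow_le_pow_right₀ hK1 (by omega)
      have h6 : (T:ℝ) * K ^ T ≤ (T₁:ℝ) * K ^ T₁ := by
        have hmr : (T:ℝ) ≤ (T₁:ℝ) := by exact_mod_cast (by omega : T ≤ T₁)
        have h0 : (0:ℝ) ≤ K ^ T := (pow_pos hKpos T).le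
        exact mul_le_mul hmr h5 h0 (Nat.cast_nonneg T₁)
      rw [hABdef]
      have h7 := mul_le_mul_of_nonneg_right h5 (qf_nonneg S a1)
      have h8 := mul_le_mul_of_nonneg_right h6 hBDnn
      linarith only [h1, h3, h4, h7, h8, hdivnn]
  -- final assembly
  intro s t hs hst
  have h1 : s + 1 ≤ t := hst
  have h2 := hmain s t h1 (a (t - s))
  have h3 := hFdot ((((List.range (s + 1)).map fun i => Zm (t - i)).prod) *ᵥ a (t - s))
  have h4 := hABu (t - s) (by omega)
  have h5 : qf S ((((List.range (s + 1)).map fun i => Zm (t - i)).prod) *ᵥ a (t - s))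
      ≤ CK * ρ₁ ^ (s + 1) * AB := by
    have h6 : CK * ρ₁ ^ (s + 1) * qf S (a (t - s)) ≤ CK * ρ₁ ^ (s + 1) * AB :=
      mul_le_mul_of_nonneg_left h4 (mul_nonneg hCKpos.le (pow_pos hρ₁pos _).le)
    calc qf S ((((List.range (s + 1)).map fun i => Zm (t - i)).prod) *ᵥ a (t - s))
        ≤ CK * ρ₁ ^ (s + 1) * qf S (a (t - s)) := h2
      _ ≤ CK * ρ₁ ^ (s + 1) * AB := h6
  have hfin : |F ⬝ᵥ ((((List.range (s + 1)).map fun i => Zm (t - i)).prod) *ᵥ a (t - s))|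
      ≤ Real.sqrt (F ⬝ᵥ F) * (Real.sqrt cR * (CK * ρ₁ ^ (s + 1) * AB)) := by
    refine le_trans h3 ?_
    refine mul_le_mul_of_nonneg_left ?_ (Real.sqrt_nonneg _)
    exact mul_le_mul_of_nonneg_left h5 (Real.sqrt_nonneg _)
  calc |F ⬝ᵥ ((((List.range (s + 1)).map fun i => Zm (t - i)).prod) *ᵥ a (t - s))|
      ≤ Real.sqrt (F ⬝ᵥ F) * (Real.sqrt cR * (CK * ρ₁ ^ (s + 1) * AB)) := hfin
    _ = ρ₁ ^ s * (Real.sqrt (F ⬝ᵥ F) * Real.sqrt cR * (CK * ρ₁ * AB)) := by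
        rw [pow_succ]; ring
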